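/- arXiv:1304.7493 — 3 statements merged into one kernel-verified Lean document; each statement's English description precedes it below -/
import Mathlib

section
/- Let X be a nonempty metric space that is locally compact, isometrically homogeneous, and admits a dilation of factor λ > 1. Then X is metrically doubling: there exists a constant C ≥ 1 such that for every x ∈ X and every r > 0, the closed ball of center x and radius r can be covered by at most C closed balls of radius r/2. -/
/-- `X` is isometrically homogeneous: for all `p q` there is a surjective
isometry sending `p` to `q`. -/
def IsometricallyHomogeneous (X : Type*) [MetricSpace X] : Prop :=
  ∀ p q : X, ∃ f : X → X, Isometry f ∧ Function.Surjective f ∧ f p = q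

/-- `f` is a dilation of factor `λ` on `X`: a homeomorphism multiplying all
distances by `λ`. -/
def IsDilation {X : Type*} [MetricSpace X] (f : X ≃ₜ X) (lam : ℝ) : Prop :=
  ∀ p q : X, dist (f p) (f q) = lam * dist p q

lemma dilation_zpow {X : Type*} [MetricSpace X] (f : X ≃ₜ X) (lam : ℝ)
    (hlam : 0 < lam) (hf : IsDilation f lam) (m : ℤ) (p q : X) :
    dist ((f.toEquiv ^ m) p) ((f.toEquiv ^ m) q) = lam ^ m * dist p q := by
  have hinv : ∀ p q : X, dist (f.toEquiv⁻¹ p) (f.toEquiv⁻¹ q) = lam⁻¹ * dist p q := by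
    intro p q
    have := hf (f.toEquiv⁻¹ p) (f.toEquiv⁻¹ q)
    have h1 : f (f.toEquiv⁻¹ p) = p := f.toEquiv.apply_symm_apply p
    have h2 : f (f.toEquiv⁻¹ q) = q := f.toEquiv.apply_symm_apply q
    rw [h1, h2] at this
    rw [this]
    field_simp
  induction m using Int.induction_on with
  | zero => simp
  | succ n ih =>
      have : (f.toEquiv ^ ((n : ℤ) + 1)) = f.toEquiv * f.toEquiv ^ (n : ℤ) := by
        rw [← zpow_one_add f.toEquiv]; ring_nf
      rw [this]
      simp only [Equiv.Perm.mul_apply]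
      rw [show ∀ a b : X, dist (f.toEquiv a) (f.toEquiv b) = lam * dist a b from hf, ih,
        zpow_add_one₀ (ne_of_gt hlam)]
      ring
  | pred n ih =>
      have : (f.toEquiv ^ (-(n : ℤ) - 1)) = f.toEquiv⁻¹ * f.toEquiv ^ (-(n : ℤ)) := by
        rw [← zpow_neg_one, ← zpow_add f.toEquiv]; ring_nf
      rw [this]
      simp only [Equiv.Perm.mul_apply]
      rw [hinv, ih, show (-(n : ℤ) - 1) = (-(n:ℤ)) + (-1) by ring,
        zpow_add₀ (ne_of_gt hlam), zpow_neg_one]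
      ring

theorem doubling_of_locallyCompact_homogeneous_selfSimilar
    (X : Type*) [MetricSpace X] [Nonempty X] [LocallyCompactSpace X]
    (hhom : IsometricallyHomogeneous X)
    (lam : ℝ) (hlam : 1 < lam) (f : X ≃ₜ X) (hf : IsDilation f lam) :
    ∃ C : ℕ, 1 ≤ C ∧ ∀ (x : X) (r : ℝ), 0 < r →
      ∃ t : Finset X, t.card ≤ C ∧
        Metric.closedBall x r ⊆ ⋃ y ∈ t, Metric.closedBall y (r / 2) := by
  have hlam0 : 0 < lam := lt_trans one_pos hlam
  obtain ⟨x₀⟩ := ‹Nonempty X›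
  -- compact closed ball around x₀
  obtain ⟨K, hKc, hKn⟩ := exists_compact_mem_nhds x₀
  obtain ⟨R, hR, hRK⟩ := Metric.nhds_basis_closedBall.mem_iff.mp hKn
  have hball : IsCompact (Metric.closedBall x₀ R) :=
    hKc.of_isClosed_subset Metric.isClosed_closedBall hRK
  -- finite cover of this ball by small balls
  have hε : (0:ℝ) < R / (2 * lam) := by positivity
  obtain ⟨T, hTsub, hTfin, hTcov⟩ := hball.finite_cover_balls hε
  classical
  refine ⟨max hTfin.toFinset.card 1, le_max_right _ _, ?_⟩
  intro x r hr
  -- choose integer power so that r < lam^m * R ≤ lam * r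
  obtain ⟨n, hn1, hn2⟩ := exists_mem_Ico_zpow (div_pos hr hR) hlam
  set m : ℤ := n + 1 with hm
  have hRm : 0 < lam ^ m * R := by positivity
  have hs1 : r < lam ^ m * R := by
    rw [div_lt_iff₀ hR] at hn2
    calc r < lam ^ (n+1) * R := hn2
    _ = lam ^ m * R := rfl
  have hs2 : lam ^ m * R ≤ lam * r := by
    rw [le_div_iff₀ hR] at hn1
    have : lam ^ m = lam * lam ^ n := by
      rw [hm, zpow_add_one₀ (ne_of_gt hlam0)]; ring
    rw [this]
    calc lam * lam ^ n * R = lam * (lam ^ n * R) := by ring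
    _ ≤ lam * r := by
        have := mul_le_mul_of_nonneg_left hn1 (le_of_lt hlam0); linarith
  set g : Equiv.Perm X := f.toEquiv ^ m with hg
  have hgd : ∀ p q : X, dist (g p) (g q) = lam ^ m * dist p q :=
    dilation_zpow f lam hlam0 hf m
  obtain ⟨φ, hφiso, hφsurj, hφx⟩ := hhom (g x₀) x
  refine ⟨hTfin.toFinset.image (fun c => φ (g c)), ?_, ?_⟩
  · exact le_trans (Finset.card_image_le) (le_max_left _ _)
  · intro z hz
    obtain ⟨z', rfl⟩ := hφsurj z
    obtain ⟨w, rfl⟩ := g.surjective z'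
    have hdist : lam ^ m * dist w x₀ ≤ r := by
      have : dist (φ (g w)) (φ (g x₀)) ≤ r := by
        rw [hφx]; exact hz
      rwa [hφiso.dist_eq, hgd] at this
    have hw : w ∈ Metric.closedBall x₀ R := by
      rw [Metric.mem_closedBall]
      by_contra h
      push_neg at h
      have : lam ^ m * R < lam ^ m * dist w x₀ :=
        mul_lt_mul_of_pos_left h (by positivity)
      linarith
    obtain ⟨c, hcT, hcw⟩ := Set.mem_iUnion₂.mp (hTcov hw)
    refine Set.mem_iUnion₂.mpr ⟨φ (g c), ?_, ?_⟩
    · exact Finset.mem_image_of_mem _ (hTfin.mem_toFinset.mpr hcT)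
    · rw [Metric.mem_closedBall, hφiso.dist_eq, hgd]
      have h1 : dist w c < R / (2 * lam) := Metric.mem_ball.mp hcw
      have h2 : lam ^ m * dist w c ≤ lam ^ m * (R / (2 * lam)) :=
        mul_le_mul_of_nonneg_left (le_of_lt h1) (by positivity)
      have h3 : lam ^ m * (R / (2 * lam)) = (lam ^ m * R) / (2 * lam) := by ring
      have h4 : (lam ^ m * R) / (2 * lam) ≤ (lam * r) / (2 * lam) := by
        apply div_le_div_of_nonneg_right hs2 (by positivity)
      have h5 : (lam * r) / (2 * lam) = r / 2 := by
        field_simp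
      linarith
end

section
/- Every locally compact metric space that is isometrically homogeneous is a complete metric space. -/
theorem completeSpace_of_locallyCompact_homogeneous
    (X : Type*) [MetricSpace X] [LocallyCompactSpace X]
    (hhom : IsometricallyHomogeneous X) :
    CompleteSpace X := by
  rcases isEmpty_or_nonempty X with hX | hX
  · haveI : CompactSpace X := Finite.compactSpace
    exact complete_of_compact
  obtain ⟨p⟩ := hX
  obtain ⟨r, rpos, hcomp⟩ := Metric.exists_isCompact_closedBall p
  -- every closed ball of radius r is compact
  have key : ∀ q : X, IsCompact (Metric.closedBall q r) := by
    intro q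
    obtain ⟨f, hiso, hsurj, hfp⟩ := hhom p q
    have himg : f '' Metric.closedBall p r = Metric.closedBall q r := by
      ext y
      constructor
      · rintro ⟨x, hx, rfl⟩
        simpa [Metric.mem_closedBall, ← hfp, hiso.dist_eq] using hx
      · intro hy
        obtain ⟨x, rfl⟩ := hsurj y
        exact ⟨x, by simpa [Metric.mem_closedBall, ← hfp, hiso.dist_eq] using hy, rfl⟩
    rw [← himg]
    exact hcomp.image hiso.continuous
  apply Metric.complete_of_cauchySeq_tendsto
  intro u hu
  obtain ⟨N, hN⟩ := Metric.cauchySeq_iff'.1 hu r rpos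
  have hmem : ∀ n, u (n + N) ∈ Metric.closedBall (u N) r := fun n =>
    Metric.mem_closedBall.2 (le_of_lt (hN (n + N) (Nat.le_add_left N n)))
  have htail : CauchySeq (fun n => u (n + N)) := hu.comp_tendsto
    (Filter.tendsto_add_atTop_nat N)
  obtain ⟨a, _, ha⟩ := cauchySeq_tendsto_of_isComplete (key (u N)).isComplete hmem htail
  exact ⟨a, (Filter.tendsto_add_atTop_iff_nat N).1 ha⟩
end

section
/- Let X be a nonempty metric space that is locally compact, isometrically homogeneous, and admits a dilation of factor λ > 1. Then X is a proper metric space, i.e., every closed ball in X is compact. -/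
theorem properSpace_of_locallyCompact_homogeneous_selfSimilar
    (X : Type*) [MetricSpace X] [Nonempty X] [LocallyCompactSpace X]
    (hhom : IsometricallyHomogeneous X)
    (lam : ℝ) (hlam : 1 < lam) (f : X ≃ₜ X) (hf : IsDilation f lam) :
    ProperSpace X := by
  have hlam0 : (0 : ℝ) < lam := lt_trans zero_lt_one hlam
  obtain ⟨p₀⟩ := ‹Nonempty X›
  obtain ⟨r, rpos, hr⟩ := Metric.exists_isCompact_closedBall p₀
  -- homogeneity: compactness of one ball of radius s gives all balls of radius s
  have hom : ∀ (p q : X) (s : ℝ), IsCompact (Metric.closedBall p s) →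
      IsCompact (Metric.closedBall q s) := by
    intro p q s hc
    obtain ⟨g, hg, hgs, hgp⟩ := hhom p q
    have himg : g '' Metric.closedBall p s = Metric.closedBall q s := by
      apply Set.Subset.antisymm
      · rintro _ ⟨x, hx, rfl⟩
        rw [Metric.mem_closedBall] at hx ⊢
        rw [← hgp, hg.dist_eq]; exact hx
      · intro y hy
        obtain ⟨x, rfl⟩ := hgs y
        refine ⟨x, ?_, rfl⟩
        rw [Metric.mem_closedBall] at hy ⊢
        rwa [← hgp, hg.dist_eq] at hy
    rw [← himg]
    exact hc.image hg.continuous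
  -- dilation: scale a compact ball
  have dil : ∀ (p : X) (s : ℝ), IsCompact (Metric.closedBall p s) →
      IsCompact (Metric.closedBall (f p) (lam * s)) := by
    intro p s hc
    have himg : f '' Metric.closedBall p s = Metric.closedBall (f p) (lam * s) := by
      apply Set.Subset.antisymm
      · rintro _ ⟨x, hx, rfl⟩
        rw [Metric.mem_closedBall] at hx ⊢
        rw [hf]
        exact mul_le_mul_of_nonneg_left hx hlam0.le
      · intro y hy
        obtain ⟨x, rfl⟩ := f.surjective y
        refine ⟨x, ?_, rfl⟩
        rw [Metric.mem_closedBall] at hy ⊢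
        rw [hf] at hy
        exact le_of_mul_le_mul_left hy hlam0
    rw [← himg]
    exact hc.image f.continuous
  -- induction: balls of radius lam^n * r are compact
  have key : ∀ n : ℕ, ∀ q : X, IsCompact (Metric.closedBall q (lam ^ n * r)) := by
    intro n
    induction n with
    | zero => intro q; simpa using hom p₀ q r hr
    | succ n ih =>
        intro q
        have := dil p₀ (lam ^ n * r) (ih p₀)
        rw [← mul_assoc, ← pow_succ'] at this
        exact hom (f p₀) q _ this
  constructor
  intro x R
  obtain ⟨n, hn⟩ := pow_unbounded_of_one_lt (R / r) hlam
  have hRle : R ≤ lam ^ n * r := by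
    have := (div_le_iff₀ rpos).mp hn.le
    linarith
  exact (key n x).of_isClosed_subset Metric.isClosed_closedBall
    (Metric.closedBall_subset_closedBall hRle)
end
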